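/- Let Ω ⊆ ℝ² be open, let u, v : Ω → ℝ be twice continuously differentiable and harmonic on Ω (Δu = Δv = 0), and let U : Ω → ℝ² be continuously differentiable. Define the vector field b = ⟨U, ∇u⟩ ∇v + ⟨U, ∇v⟩ ∇u − ⟨∇u, ∇v⟩ U on Ω. Then at every point of Ω, div b = ⟨(DU + DUᵀ) ∇u, ∇v⟩ − (div U) ⟨∇u, ∇v⟩, where DU is the Jacobian matrix of U. Equivalently, with 𝒜 = (div U)·I − (DU + DUᵀ), one has ⟨𝒜 ∇u, ∇v⟩ = −div b. -/

import Mathlib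

open scoped RealInnerProductSpace
open Gradient

section Aux
open InnerProductSpace

noncomputable section

local notation "E2" => EuclideanSpace ℝ (Fin 2)

private lemma decomp' (w : E2) : w = ∑ i : Fin 2, w i • EuclideanSpace.single i (1:ℝ) := by
  ext j
  simp only [Finset.sum_apply, PiLp.smul_apply, EuclideanSpace.single_apply, smul_eq_mul]
  fin_cases j <;> simp

private lemma clm_apply_sum' (T : E2 →L[ℝ] E2) (w : E2) :
    T w = ∑ i : Fin 2, w i • T (EuclideanSpace.single i (1:ℝ)) := by
  conv_lhs => rw [decomp' w, map_sum]
  simp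

private lemma grad_apply' (f : E2 → ℝ) (y z : E2) : ⟪∇ f y, z⟫ = fderiv ℝ f y z := by
  have : ∇ f y = (toDual ℝ E2).symm (fderiv ℝ f y) := rfl
  rw [this, toDual_symm_apply]

private lemma grad_eq' (f : E2 → ℝ) : ∇ f =
    fun y => ∑ i : Fin 2, (fderiv ℝ f y (EuclideanSpace.single i (1:ℝ))) •
      EuclideanSpace.single i (1:ℝ) := by
  funext y
  conv_lhs => rw [decomp' (∇ f y)]
  refine Finset.sum_congr rfl fun i _ => ?_
  congr 1
  have h1 : (∇ f y) i = ⟪∇ f y, EuclideanSpace.single i (1:ℝ)⟫ := by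
    rw [EuclideanSpace.inner_single_right]; simp
  rw [h1, grad_apply']

private lemma grad_hasFDerivAt' {f : E2 → ℝ} {x : E2} (hf : ContDiffAt ℝ 2 f x) :
    HasFDerivAt (∇ f) (∑ i : Fin 2,
      ((ContinuousLinearMap.apply ℝ ℝ (EuclideanSpace.single i (1:ℝ))).comp
        (fderiv ℝ (fderiv ℝ f) x)).smulRight (EuclideanSpace.single i (1:ℝ))) x := by
  rw [grad_eq']
  have hdfd : DifferentiableAt ℝ (fderiv ℝ f) x :=
    (hf.fderiv_right (m := 1) (by norm_num)).differentiableAt (by norm_num)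
  apply HasFDerivAt.fun_sum
  intro i _
  exact ((ContinuousLinearMap.apply ℝ ℝ _).hasFDerivAt.comp x
    hdfd.hasFDerivAt).smul_const (EuclideanSpace.single i (1:ℝ))

private lemma grad_pair' {f : E2 → ℝ} {x : E2} (hf : ContDiffAt ℝ 2 f x) (w z : E2) :
    ⟪fderiv ℝ (∇ f) x w, z⟫ = fderiv ℝ (fderiv ℝ f) x w z := by
  rw [(grad_hasFDerivAt' hf).fderiv]
  conv_rhs => rw [decomp' z, map_sum]
  simp [ContinuousLinearMap.sum_apply, sum_inner, inner_add_left, real_inner_smul_left,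
    EuclideanSpace.inner_single_left]
  ring

private lemma grad_pair_symm' {f : E2 → ℝ} {x : E2} (hf : ContDiffAt ℝ 2 f x) (w z : E2) :
    ⟪fderiv ℝ (∇ f) x w, z⟫ = ⟪fderiv ℝ (∇ f) x z, w⟫ := by
  rw [grad_pair' hf, grad_pair' hf]
  exact (hf.isSymmSndFDerivAt (by norm_num)) w z

private lemma snd_pair' {f : E2 → ℝ} {x : E2} (hf : ContDiffAt ℝ 2 f x) (w z : E2) :
    fderiv ℝ (fun y => fderiv ℝ f y z) x w = fderiv ℝ (fderiv ℝ f) x w z := by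
  have hdfd : DifferentiableAt ℝ (fderiv ℝ f) x :=
    (hf.fderiv_right (m := 1) (by norm_num)).differentiableAt (by norm_num)
  have h := (ContinuousLinearMap.apply ℝ ℝ z).hasFDerivAt.comp x hdfd.hasFDerivAt
  have h' : HasFDerivAt (fun y => fderiv ℝ f y z)
      (((ContinuousLinearMap.apply ℝ ℝ z).comp (fderiv ℝ (fderiv ℝ f) x))) x := h
  rw [h'.fderiv]
  rfl

private lemma sum_mul_left' (T : E2 →L[ℝ] E2) (a z : E2) :
    ∑ i : Fin 2, ⟪T (EuclideanSpace.single i (1:ℝ)), z⟫ * a i = ⟪T a, z⟫ := by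
  conv_rhs => rw [clm_apply_sum' T a]
  rw [sum_inner]
  refine Finset.sum_congr rfl fun i _ => ?_
  rw [real_inner_smul_left]; ring

private lemma sum_mul_right' (T : E2 →L[ℝ] E2) (a z : E2) :
    ∑ i : Fin 2, ⟪z, T (EuclideanSpace.single i (1:ℝ))⟫ * a i = ⟪z, T a⟫ := by
  conv_rhs => rw [clm_apply_sum' T a]
  rw [inner_sum]
  refine Finset.sum_congr rfl fun i _ => ?_
  rw [real_inner_smul_right]; ring

end
end Aux

/-- divergence identity for
`b = ⟨U,∇u⟩∇v + ⟨U,∇v⟩∇u − ⟨∇u,∇v⟩U` when `u, v` are harmonic: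
`div b = ⟨(DU + DUᵀ)∇u, ∇v⟩ − (div U)⟨∇u, ∇v⟩`, i.e. `⟨𝒜∇u, ∇v⟩ = −div b`. -/
theorem stmt_11 (Ω : Set (EuclideanSpace ℝ (Fin 2))) (hΩ : IsOpen Ω)
    (u v : EuclideanSpace ℝ (Fin 2) → ℝ)
    (U : EuclideanSpace ℝ (Fin 2) → EuclideanSpace ℝ (Fin 2))
    (hu : ContDiffOn ℝ 2 u Ω) (hv : ContDiffOn ℝ 2 v Ω)
    (hU : ContDiffOn ℝ 1 U Ω)
    (hharmu : ∀ x ∈ Ω, ∑ i : Fin 2,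
      fderiv ℝ (fun y => fderiv ℝ u y (EuclideanSpace.single i (1 : ℝ))) x
        (EuclideanSpace.single i (1 : ℝ)) = 0)
    (hharmv : ∀ x ∈ Ω, ∑ i : Fin 2,
      fderiv ℝ (fun y => fderiv ℝ v y (EuclideanSpace.single i (1 : ℝ))) x
        (EuclideanSpace.single i (1 : ℝ)) = 0)
    (b : EuclideanSpace ℝ (Fin 2) → EuclideanSpace ℝ (Fin 2))
    (hb : b = fun y => ⟪U y, ∇ u y⟫ • ∇ v y + ⟪U y, ∇ v y⟫ • ∇ u y - ⟪∇ u y, ∇ v y⟫ • U y)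
    (divb divU : EuclideanSpace ℝ (Fin 2) → ℝ)
    (hdivb : divb = fun x => ∑ i : Fin 2,
      ⟪fderiv ℝ b x (EuclideanSpace.single i (1 : ℝ)), EuclideanSpace.single i (1 : ℝ)⟫)
    (hdivU : divU = fun x => ∑ i : Fin 2,
      ⟪fderiv ℝ U x (EuclideanSpace.single i (1 : ℝ)), EuclideanSpace.single i (1 : ℝ)⟫) :
    ∀ x ∈ Ω,
      divb x = (⟪fderiv ℝ U x (∇ u x), ∇ v x⟫ + ⟪∇ u x, fderiv ℝ U x (∇ v x)⟫) -
          divU x * ⟪∇ u x, ∇ v x⟫ ∧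
      divU x * ⟪∇ u x, ∇ v x⟫ -
          (⟪fderiv ℝ U x (∇ u x), ∇ v x⟫ + ⟪∇ u x, fderiv ℝ U x (∇ v x)⟫) = -divb x := by
  intro x hx
  have hxΩ : Ω ∈ nhds x := hΩ.mem_nhds hx
  have huAt : ContDiffAt ℝ 2 u x := hu.contDiffAt hxΩ
  have hvAt : ContDiffAt ℝ 2 v x := hv.contDiffAt hxΩ
  have hUAt : ContDiffAt ℝ 1 U x := hU.contDiffAt hxΩ
  have hU' : DifferentiableAt ℝ U x := hUAt.differentiableAt one_ne_zero
  have hguF : HasFDerivAt (∇ u) (fderiv ℝ (∇ u) x) x :=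
    (grad_hasFDerivAt' huAt).differentiableAt.hasFDerivAt
  have hgvF : HasFDerivAt (∇ v) (fderiv ℝ (∇ v) x) x :=
    (grad_hasFDerivAt' hvAt).differentiableAt.hasFDerivAt
  set p := ∇ u x with hp
  set q := ∇ v x with hq
  set A := fderiv ℝ U x with hA
  set Hu := fderiv ℝ (∇ u) x with hHu
  set Hv := fderiv ℝ (∇ v) x with hHv
  set W := U x with hW
  have h1 : HasFDerivAt (fun y => ⟪U y, ∇ u y⟫)
      ((fderivInnerCLM ℝ (W, p)).comp (A.prod Hu)) x := hU'.hasFDerivAt.inner ℝ hguF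
  have h2 : HasFDerivAt (fun y => ⟪U y, ∇ v y⟫)
      ((fderivInnerCLM ℝ (W, q)).comp (A.prod Hv)) x := hU'.hasFDerivAt.inner ℝ hgvF
  have h3 : HasFDerivAt (fun y => ⟪∇ u y, ∇ v y⟫)
      ((fderivInnerCLM ℝ (p, q)).comp (Hu.prod Hv)) x := hguF.inner ℝ hgvF
  have hB : HasFDerivAt b
      ((⟪W, p⟫ • Hv + ((fderivInnerCLM ℝ (W, p)).comp (A.prod Hu)).smulRight q +
        (⟪W, q⟫ • Hu + ((fderivInnerCLM ℝ (W, q)).comp (A.prod Hv)).smulRight p)) -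
       (⟪p, q⟫ • A + ((fderivInnerCLM ℝ (p, q)).comp (Hu.prod Hv)).smulRight W)) x := by
    rw [hb]
    exact ((h1.smul hgvF).add (h2.smul hguF)).sub (h3.smul hU'.hasFDerivAt)
  have key : divb x = ∑ i : Fin 2,
      (⟪W, p⟫ * ⟪Hv (EuclideanSpace.single i (1:ℝ)), EuclideanSpace.single i (1:ℝ)⟫ +
        (⟪W, Hu (EuclideanSpace.single i (1:ℝ))⟫ + ⟪A (EuclideanSpace.single i (1:ℝ)), p⟫) * q i +
       (⟪W, q⟫ * ⟪Hu (EuclideanSpace.single i (1:ℝ)), EuclideanSpace.single i (1:ℝ)⟫ +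
        (⟪W, Hv (EuclideanSpace.single i (1:ℝ))⟫ + ⟪A (EuclideanSpace.single i (1:ℝ)), q⟫) * p i) -
       (⟪p, q⟫ * ⟪A (EuclideanSpace.single i (1:ℝ)), EuclideanSpace.single i (1:ℝ)⟫ +
        (⟪p, Hv (EuclideanSpace.single i (1:ℝ))⟫ + ⟪Hu (EuclideanSpace.single i (1:ℝ)), q⟫) * W i)) := by
    rw [hdivb]
    refine Finset.sum_congr rfl fun i _ => ?_
    rw [hB.fderiv]
    simp only [ContinuousLinearMap.add_apply, ContinuousLinearMap.sub_apply,
      ContinuousLinearMap.smul_apply, ContinuousLinearMap.smulRight_apply,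
      ContinuousLinearMap.comp_apply, ContinuousLinearMap.prod_apply, fderivInnerCLM_apply,
      inner_add_left, inner_sub_left, real_inner_smul_left]
    have hsr : ∀ (w : EuclideanSpace ℝ (Fin 2)),
        ⟪w, EuclideanSpace.single i (1:ℝ)⟫ = w i := fun w => by
      rw [EuclideanSpace.inner_single_right]; simp
    rw [hsr q, hsr p, hsr W]
  have Fu : ∑ i : Fin 2, ⟪Hu (EuclideanSpace.single i (1:ℝ)), EuclideanSpace.single i (1:ℝ)⟫ = 0 := by
    rw [Finset.sum_congr rfl fun i _ => (grad_pair' huAt _ _)]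
    rw [Finset.sum_congr rfl fun i _ => (snd_pair' huAt _ _).symm]
    exact hharmu x hx
  have Fv : ∑ i : Fin 2, ⟪Hv (EuclideanSpace.single i (1:ℝ)), EuclideanSpace.single i (1:ℝ)⟫ = 0 := by
    rw [Finset.sum_congr rfl fun i _ => (grad_pair' hvAt _ _)]
    rw [Finset.sum_congr rfl fun i _ => (snd_pair' hvAt _ _).symm]
    exact hharmv x hx
  have FA : ∑ i : Fin 2, ⟪A (EuclideanSpace.single i (1:ℝ)), EuclideanSpace.single i (1:ℝ)⟫ = divU x := by
    rw [hdivU]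
  have main : divb x = (⟪A p, q⟫ + ⟪p, A q⟫) - divU x * ⟪p, q⟫ := by
    rw [key]
    simp only [add_mul, sub_eq_add_neg, neg_add, Finset.sum_add_distrib, Finset.sum_neg_distrib,
      ← Finset.mul_sum]
    rw [Fu, Fv, FA, sum_mul_left' A p q, sum_mul_left' A q p, sum_mul_right' Hu q W,
      sum_mul_right' Hv p W, sum_mul_right' Hv W p, sum_mul_left' Hu W q]
    have e1 : ⟪Hu W, q⟫ = ⟪W, Hu q⟫ := by
      rw [grad_pair_symm' huAt, real_inner_comm]
    have e2 : ⟪p, Hv W⟫ = ⟪W, Hv p⟫ := by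
      rw [real_inner_comm, grad_pair_symm' hvAt, real_inner_comm]
    have e3 : ⟪A q, p⟫ = ⟪p, A q⟫ := real_inner_comm _ _
    rw [e1, e2, e3]
    ring
  exact ⟨main, by rw [main]; ring⟩
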